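/- In the mis-specified model case, matching w(β) = v(β) where v(β) = −(b/(2k))β² + ((p+b)/k)β and w(x) = −(ε/(2k))x² + (λ/k)(x − max(0,x−β)) + (ε/k)x yields the constraint force λ = (β/2)(ε − b) + p + b − ε for β ∈ (0,1]. -/

import Mathlib

theorem stmt_16 (k b p ε l β : ℝ) (hk : k ≠ 0) (hβ : β ∈ Set.Ioc (0 : ℝ) 1) :
    (-(ε / (2 * k)) * β ^ 2 + (l / k) * (β - max 0 (β - β)) + (ε / k) * β
        = -(b / (2 * k)) * β ^ 2 + ((p + b) / k) * β)
      ↔ l = (β / 2) * (ε - b) + p + b - ε := by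
  obtain ⟨hβ0, _⟩ := hβ
  have hβ' : β ≠ 0 := ne_of_gt hβ0
  rw [sub_self, max_self]
  constructor
  · intro h
    field_simp at h
    have h4 : (k^4) * (-(ε*β^2) + 2*l*β + 2*ε*β) = (k^4) * (-(b*β^2) + 2*(p+b)*β) := by
      linear_combination k ^ 4 * h
    have h5 := mul_left_cancel₀ (pow_ne_zero 4 hk) h4
    have h2 : β * (l - ((β / 2) * (ε - b) + p + b - ε)) = 0 := by linear_combination h5 / 2
    have := mul_eq_zero.mp h2
    rcases this with h3 | h3
    · exact absurd h3 hβ'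
    · linarith
  · intro h
    subst h
    field_simp
    ring
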